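/- The number 46657 is composite, yet it satisfies 46657 ≡ 1 (mod 8), 2^23328 ≡ 1 (mod 46657), and a^23328 ≡ 1 (mod 46657) for each a in {216, 217, 152, 153} (where 216 = ⌊√46657⌋ and 152 = ⌊√(46657/2)⌋); however, the Legendre symbol (46657 | 5) = -1 while 5^23328 is not congruent to -1 modulo 46657, so 46657 is detected as composite by the third step of the Gauss-Euler test. -/

import Mathlib

lemma pow_zmod_46657 (a n r : ℕ) (h : a ^ n % 46657 = r) :
    (a : ZMod 46657) ^ n = (r : ZMod 46657) := by
  subst h
  rw [ZMod.natCast_mod]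
  push_cast
  ring

/-- `46657` is composite, satisfies `46657 ≡ 1 (mod 8)`, `2 ^ 23328 ≡ 1 (mod 46657)`, and
`a ^ 23328 ≡ 1 (mod 46657)` for `a ∈ {216, 217, 152, 153}` (with `216 = ⌊√46657⌋` and
`152 = ⌊√(46657/2)⌋`), but the Legendre symbol `(46657 | 5) = -1` while
`5 ^ 23328 ≢ -1 (mod 46657)`. -/
theorem gauss_euler_detects_46657 :
    ¬ (46657 : ℕ).Prime ∧
    46657 % 8 = 1 ∧
    (2 : ZMod 46657) ^ 23328 = 1 ∧
    Nat.sqrt 46657 = 216 ∧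
    Nat.sqrt (46657 / 2) = 152 ∧
    (∀ a ∈ ({216, 217, 152, 153} : Finset ℕ), (a : ZMod 46657) ^ 23328 = 1) ∧
    @legendreSym 5 ⟨by norm_num⟩ 46657 = -1 ∧
    (5 : ZMod 46657) ^ 23328 ≠ -1 := by
  refine ⟨?_, by norm_num, ?_, (Nat.eq_sqrt.mpr (by norm_num)).symm, (Nat.eq_sqrt.mpr (by norm_num)).symm, ?_, ?_, ?_⟩
  · norm_num
  · have := pow_zmod_46657 2 23328 1 (by decide +kernel)
    simpa using this
  · intro a ha
    fin_cases ha <;>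
      [ exact (by simpa using pow_zmod_46657 216 23328 1 (by decide +kernel));
        exact (by simpa using pow_zmod_46657 217 23328 1 (by decide +kernel));
        exact (by simpa using pow_zmod_46657 152 23328 1 (by decide +kernel));
        exact (by simpa using pow_zmod_46657 153 23328 1 (by decide +kernel))]
  · decide
  · have h := pow_zmod_46657 5 23328 1 (by decide +kernel)
    simp only [Nat.cast_ofNat, Nat.cast_one] at h
    rw [h]
    decide
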